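/- Let q be a prime power, n ≥ 2, and s an integer with 1 ≤ s ≤ n-1 and gcd(s, n) = 1. Then the 𝔽_q-subspace U = {(x, x^{q^s}) : x ∈ 𝔽_{q^n}} of 𝔽_{q^n} × 𝔽_{q^n} is scattered, i.e., for every nonzero v ∈ U, the intersection of U with the 𝔽_{q^n}-span of v has 𝔽_q-dimension exactly 1. -/

import Mathlib

open Polynomial Classical

lemma aux_pow_iter {K : Type*} [Field K] (q m : ℕ) (l : K) (h : l ^ q ^ m = l) :
    ∀ k, l ^ q ^ (m * k) = l := by
  intro k
  induction k with
  | zero => simp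
  | succ k ih =>
    rw [Nat.mul_succ, pow_add, pow_mul, ih, h]

lemma aux_mem_range {Fq K : Type*} [Field Fq] [Field K] [Fintype Fq] [Fintype K] [Algebra Fq K]
    {q : ℕ} (hq : Fintype.card Fq = q) {l : K} (h : l ^ q = l) :
    ∃ c : Fq, algebraMap Fq K c = l := by
  classical
  have hq2 : 1 < q := hq ▸ Fintype.one_lt_card
  set P : K[X] := X ^ q - X with hP
  have hPne : P ≠ 0 := FiniteField.X_pow_card_sub_X_ne_zero K hq2
  have hdeg : P.natDegree = q := FiniteField.X_pow_card_sub_X_natDegree_eq K hq2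
  set S : Finset K := P.roots.toFinset with hS
  have hScard : S.card ≤ q := by
    calc S.card ≤ Multiset.card P.roots := P.roots.toFinset_card_le
    _ ≤ P.natDegree := P.card_roots' 
    _ = q := hdeg
  set I : Finset K := Finset.univ.image (algebraMap Fq K) with hI
  have hIcard : I.card = q := by
    rw [hI, Finset.card_image_of_injective _ (algebraMap Fq K).injective, Finset.card_univ, hq]
  have hIS : I ⊆ S := by
    intro x hx
    rw [hI, Finset.mem_image] at hx
    obtain ⟨c, -, rfl⟩ := hx
    have hc : c ^ q = c := by rw [← hq]; exact FiniteField.pow_card c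
    rw [hS, Multiset.mem_toFinset, mem_roots hPne]
    simp [hP, IsRoot, ← map_pow, hc]
  have : I = S := Finset.eq_of_subset_of_card_le hIS (hScard.trans_eq hIcard.symm)
  have hlS : l ∈ S := by
    rw [hS, Multiset.mem_toFinset, mem_roots hPne]
    simp [hP, IsRoot, h]
  rw [← this, hI, Finset.mem_image] at hlS
  obtain ⟨c, -, hc⟩ := hlS
  exact ⟨c, hc⟩

theorem pseudoregulus_subspace_scattered
    (q n s : ℕ) (hn : 2 ≤ n) (hs1 : 1 ≤ s) (hs2 : s ≤ n - 1) (hgcd : Nat.gcd s n = 1)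
    (Fq K : Type*) [Field Fq] [Field K] [Fintype Fq] [Fintype K] [Algebra Fq K]
    (hq : Fintype.card Fq = q) (hK : Fintype.card K = q ^ n)
    (U : Submodule Fq (K × K))
    (hU : (U : Set (K × K)) = {p | ∃ x : K, p = (x, x ^ q ^ s)}) :
    ∀ v ∈ U, v ≠ 0 →
      Module.finrank Fq
        ↥(U ⊓ (Submodule.span K {v}).restrictScalars Fq) = 1 := by
  intro v hv hv0
  have hvU : v ∈ (U : Set (K × K)) := hv
  rw [hU] at hvU
  obtain ⟨x0, hx0⟩ := hvU
  have hx0ne : x0 ≠ 0 := by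
    rintro rfl
    apply hv0
    simp only [hx0]
    have hq0 : 0 < q := hq ▸ Fintype.card_pos
    have : (0:K) ^ q ^ s = 0 := by
      apply zero_pow
      positivity
    simp [this, Prod.ext_iff]
  have key : U ⊓ (Submodule.span K {v}).restrictScalars Fq = Submodule.span Fq {v} := by
    apply le_antisymm
    · rintro w hw
      rw [Submodule.mem_inf] at hw
      obtain ⟨hwU, hwS⟩ := hw
      rw [Submodule.restrictScalars_mem, Submodule.mem_span_singleton] at hwS
      obtain ⟨l, hl⟩ := hwS
      have hwU' : w ∈ (U : Set (K × K)) := hwU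
      rw [hU] at hwU'
      obtain ⟨x, hx⟩ := hwU'
      -- relate
      have h1 : x = l * x0 := by
        have := congrArg Prod.fst (hl.trans hx)
        simpa [hx0] using this.symm
      have h2 : x ^ q ^ s = l * x0 ^ q ^ s := by
        have := congrArg Prod.snd (hl.trans hx)
        simpa [hx0] using this.symm
      have hls : l ^ q ^ s = l := by
        have hx0s : x0 ^ q ^ s ≠ 0 := pow_ne_zero _ hx0ne
        have : l ^ q ^ s * x0 ^ q ^ s = l * x0 ^ q ^ s := by
          rw [← mul_pow, ← h1, h2]
        exact mul_right_cancel₀ hx0s this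
      have hln : l ^ q ^ n = l := by rw [← hK]; exact FiniteField.pow_card l
      -- gcd argument: l ^ q = l
      have hlq : l ^ q = l := by
        obtain ⟨m, -, hm⟩ := Nat.exists_mul_mod_eq_one_of_coprime hgcd (lt_of_lt_of_le one_lt_two hn)
        have hsm : l ^ q ^ (s * m) = l := aux_pow_iter q s l hls m
        have hdiv : s * m = n * (s * m / n) + 1 := by
          conv_lhs => rw [← Nat.div_add_mod (s * m) n, hm]
        rw [hdiv, pow_succ, pow_mul, aux_pow_iter q n l hln] at hsm
        exact hsm
      obtain ⟨c, hc⟩ := aux_mem_range hq hlq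
      rw [Submodule.mem_span_singleton]
      refine ⟨c, ?_⟩
      rw [← hl, ← hc, algebraMap_smul]
      -- done
    · rw [Submodule.span_le, Set.singleton_subset_iff]
      exact Submodule.mem_inf.mpr ⟨hv, Submodule.subset_span rfl⟩
  rw [key]
  exact finrank_span_singleton hv0
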